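/- With the trigonal degeneration data, for each r ∈ {1,2}, each 1 ≤ j ≤ m, and every z ∈ ℂ with ∏_{l=1}^m (1−λ_l³ z³) ≠ 0, one has the partial fraction identity z^{3m−3j+r} / ∏_{l=1}^m (1−λ_l³ z³) = Σ_{i=1}^{3m} a^{(r)}_{ij} / (1−λ_i z). -/

import Mathlib

noncomputable section

/-- `ω = e^{2πi/3}`. -/
def omg : ℂ := Complex.exp (2 * Real.pi * Complex.I / 3)

/-- The `3m` parameters `(λ_1,…,λ_m, ωλ_1,…,ωλ_m, ω²λ_1,…,ω²λ_m)`, indexed by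
pairs `(c, i) ∈ Fin 3 × Fin m` via `λ_{(c,i)} = ω^c λ_i`. -/
def LamT (m : ℕ) (lam : Fin m → ℂ) : Fin 3 × Fin m → ℂ :=
  fun ci => omg ^ (ci.1 : ℕ) * lam ci.2

/-- The coefficients `a⁽⁰⁾_{ij}` of Theorem 9.1 (with rows `i = (c, i')`,
`a⁽⁰⁾_{(c,i')j} = ω^c a⁽⁰⁾_{i'j}`); `j` is `0`-based, so `j+1` is the `j` of
the paper and `λ_{i}^{3j-8} = λ_i^{3(j+1)-8}`. -/
def a0T (m : ℕ) (lam : Fin m → ℂ) : Fin 3 × Fin m → Fin m → ℂ :=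
  fun ci j =>
    omg ^ (ci.1 : ℕ) *
      (-((2 * (m : ℂ) - ((j : ℕ) + 1) +
            2 * ∑ l ∈ Finset.univ.erase ci.2, lam l ^ 3 / (lam ci.2 ^ 3 - lam l ^ 3)) *
          (lam ci.2 ^ (3 * ((j : ℕ) : ℤ) + 3 - 8) /
            (3 * ∏ l ∈ Finset.univ.erase ci.2, (lam ci.2 ^ 3 - lam l ^ 3) ^ 2))))

/-- The coefficients `b⁽⁰⁾_{ij}` of Theorem 9.1. -/
def b0T (m : ℕ) (lam : Fin m → ℂ) : Fin 3 × Fin m → Fin m → ℂ :=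
  fun ci j =>
    omg ^ (ci.1 : ℕ) *
      (lam ci.2 ^ (3 * ((j : ℕ) : ℤ) + 3 - 8) /
        (9 * ∏ l ∈ Finset.univ.erase ci.2, (lam ci.2 ^ 3 - lam l ^ 3) ^ 2))

/-- The coefficients `a⁽ʳ⁾_{ij}` (`r = 1, 2`) of Theorem 9.1, with
`a⁽ʳ⁾_{(c,i')j} = ω^{-rc} a⁽ʳ⁾_{i'j}`. -/
def arT (m : ℕ) (lam : Fin m → ℂ) (r : ℕ) : Fin 3 × Fin m → Fin m → ℂ :=
  fun ci j =>
    omg ^ (-(r : ℤ) * ((ci.1 : ℕ) : ℤ)) *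
      (lam ci.2 ^ (3 * ((j : ℕ) : ℤ) + 3 - 3 - (r : ℤ)) /
        (3 * ∏ l ∈ Finset.univ.erase ci.2, (lam ci.2 ^ 3 - lam l ^ 3)))

/- ### Auxiliary lemmas -/

lemma omg_ne_zero : omg ≠ 0 := Complex.exp_ne_zero _

lemma omg_cube : omg ^ 3 = 1 := by
  rw [omg, ← Complex.exp_nat_mul]
  have : ((3:ℕ):ℂ) * (2 * Real.pi * Complex.I / 3) = 2 * Real.pi * Complex.I := by
    push_cast; ring
  rw [this, Complex.exp_two_pi_mul_I]

lemma omg_ne_one : omg ≠ 1 := by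
  intro h
  unfold omg at h
  rw [Complex.exp_eq_one_iff] at h
  obtain ⟨n, hn⟩ := h
  have hpi : (Real.pi : ℂ) ≠ 0 := by exact_mod_cast Real.pi_ne_zero
  have h2 : (2 * Real.pi * Complex.I : ℂ) ≠ 0 :=
    mul_ne_zero (mul_ne_zero two_ne_zero hpi) Complex.I_ne_zero
  have h3 : (n : ℂ) * 3 * (2 * Real.pi * Complex.I) = 1 * (2 * Real.pi * Complex.I) := by
    linear_combination (-3 : ℂ) * hn
  have h4 : (n : ℂ) * 3 = 1 := mul_right_cancel₀ h2 h3
  have : (n * 3 : ℤ) = 1 := by exact_mod_cast h4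
  omega

lemma omg_quad : omg ^ 2 + omg + 1 = 0 := by
  have h : (omg - 1) * (omg ^ 2 + omg + 1) = 0 := by
    linear_combination omg_cube
  rcases mul_eq_zero.mp h with h | h
  · exact absurd (sub_eq_zero.mp h) omg_ne_one
  · exact h

lemma omg_prod (t : ℂ) : (1 - t) * (1 - omg * t) * (1 - omg ^ 2 * t) = 1 - t ^ 3 := by
  linear_combination (-t + omg * t ^ 2 - (omg - 1) * t ^ 3) * omg_quad

lemma omega_sum (r : ℕ) (hr : r = 1 ∨ r = 2) (t : ℂ) (ht : 1 - t ^ 3 ≠ 0) :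
    ∑ c : Fin 3, omg ^ (-(r : ℤ) * ((c : ℕ) : ℤ)) / (1 - omg ^ (c : ℕ) * t) =
      3 * t ^ r / (1 - t ^ 3) := by
  have hprod := omg_prod t
  have h0 : (1 : ℂ) - t ≠ 0 := fun h => ht (by rw [← hprod, h]; ring)
  have h1 : (1 : ℂ) - omg * t ≠ 0 := fun h => ht (by rw [← hprod, h]; ring)
  have h2 : (1 : ℂ) - omg ^ 2 * t ≠ 0 := fun h => ht (by rw [← hprod, h]; ring)
  have hinv1 : omg⁻¹ = omg ^ 2 := inv_eq_of_mul_eq_one_right (by linear_combination omg_cube)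
  have hinv2 : (omg ^ (2:ℤ))⁻¹ = omg := by
    rw [show (2:ℤ) = ((2:ℕ):ℤ) from rfl, zpow_natCast]
    exact inv_eq_of_mul_eq_one_right (by linear_combination omg_cube)
  have hinv4 : (omg ^ (4:ℤ))⁻¹ = omg ^ 2 := by
    rw [show (4:ℤ) = ((4:ℕ):ℤ) from rfl, zpow_natCast]
    exact inv_eq_of_mul_eq_one_right (by linear_combination (omg ^ 3 + 1) * omg_cube)
  rw [Fin.sum_univ_three]
  rcases hr with rfl | rfl
  · norm_num
    rw [hinv1, (by exact_mod_cast hinv2 : (omg ^ (2:ℕ))⁻¹ = omg), ← one_div, div_add_div _ _ h0 h1,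
      div_add_div _ _ (mul_ne_zero h0 h1) h2,
      div_eq_div_iff (mul_ne_zero (mul_ne_zero h0 h1) h2) ht]
    linear_combination (omg^2 * (-t + t^2 + t^4 - t^5) + omg * (t - 3*t^3 + 2*t^4)
      + (1 - 3*t + 3*t^2 - t^3)) * omg_quad
  · norm_num
    rw [(by exact_mod_cast hinv2 : (omg ^ (2:ℕ))⁻¹ = omg),
      (by exact_mod_cast hinv4 : (omg ^ (4:ℕ))⁻¹ = omg ^ 2), ← one_div, div_add_div _ _ h0 h1,
      div_add_div _ _ (mul_ne_zero h0 h1) h2,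
      div_eq_div_iff (mul_ne_zero (mul_ne_zero h0 h1) h2) ht]
    linear_combination (omg * (-2*t + 3*t^2 - t^4) + (1 - 3*t^2 + 2*t^3)) * omg_quad

open Polynomial in
lemma lagrange_pf (m : ℕ) (μ : Fin m → ℂ) (hinj : Function.Injective μ)
    (j : ℕ) (hj : j < m) (w : ℂ) :
    w ^ (m - 1 - j) =
      ∑ i : Fin m, (μ i ^ j / ∏ l ∈ Finset.univ.erase i, (μ i - μ l)) *
        ∏ l ∈ Finset.univ.erase i, (1 - μ l * w) := by
  have key : (X ^ (m - 1 - j) : ℂ[X]) =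
      ∑ i : Fin m, C (μ i ^ j / ∏ l ∈ Finset.univ.erase i, (μ i - μ l)) *
        ∏ l ∈ Finset.univ.erase i, (1 - C (μ l) * X) := by
    apply Polynomial.eq_of_infinite_eval_eq
    refine Set.Infinite.mono ?_
      (Set.Finite.infinite_compl ((Set.finite_range fun l => (μ l)⁻¹).insert 0))
    intro x hx
    simp only [Set.mem_compl_iff, Set.mem_insert_iff, Set.mem_range, not_or, not_exists] at hx
    obtain ⟨hx0, hxr⟩ := hx
    have hxinv : ∀ l, x⁻¹ ≠ μ l := by
      intro l h
      have hμl : μ l ≠ 0 := h ▸ inv_ne_zero hx0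
      exact hxr l (by rw [← h, inv_inv])
    have hdeg : (X ^ j : ℂ[X]).degree < (Finset.univ : Finset (Fin m)).card := by
      rw [Polynomial.degree_X_pow, Finset.card_univ, Fintype.card_fin]
      exact_mod_cast hj
    have hL := Lagrange.eq_interpolate (v := μ) (Set.injOn_of_injective hinj) hdeg
    have hEv := congrArg (Polynomial.eval x⁻¹) hL
    simp only [Lagrange.interpolate_apply, Lagrange.basis, Lagrange.basisDivisor,
      Polynomial.eval_finset_sum, Polynomial.eval_mul, Polynomial.eval_C,
      Polynomial.eval_prod, Polynomial.eval_sub, Polynomial.eval_X,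
      Polynomial.eval_pow] at hEv
    show Polynomial.eval x _ = Polynomial.eval x _
    simp only [Polynomial.eval_pow, Polynomial.eval_X, Polynomial.eval_finset_sum,
      Polynomial.eval_mul, Polynomial.eval_C, Polynomial.eval_prod, Polynomial.eval_sub,
      Polynomial.eval_one]
    calc x ^ (m - 1 - j) = x ^ (m - 1) * (x⁻¹) ^ j := by
          rw [pow_sub₀ x hx0 (by omega : j ≤ m - 1), inv_pow]
      _ = x ^ (m - 1) * ∑ i : Fin m, μ i ^ j *
            ∏ l ∈ Finset.univ.erase i, ((μ i - μ l)⁻¹ * (x⁻¹ - μ l)) := by rw [hEv]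
      _ = _ := by
          rw [Finset.mul_sum]
          refine Finset.sum_congr rfl fun i _ => ?_
          have hc : (Finset.univ.erase i).card = m - 1 := by
            rw [Finset.card_erase_of_mem (Finset.mem_univ i), Finset.card_univ,
              Fintype.card_fin]
          rw [div_eq_mul_inv, ← Finset.prod_inv_distrib, mul_assoc, ← Finset.prod_mul_distrib,
            ← hc, ← Finset.prod_const x]
          rw [mul_left_comm, ← Finset.prod_mul_distrib]
          congr 1
          refine Finset.prod_congr rfl fun l hl => ?_
          rw [mul_left_comm, mul_sub, mul_inv_cancel₀ hx0]
          ring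
  have := congrArg (Polynomial.eval w) key
  simpa only [Polynomial.eval_pow, Polynomial.eval_X, Polynomial.eval_finset_sum,
    Polynomial.eval_mul, Polynomial.eval_C, Polynomial.eval_prod, Polynomial.eval_sub,
    Polynomial.eval_one] using this

lemma pf_div (m : ℕ) (μ : Fin m → ℂ) (hinj : Function.Injective μ) (j : ℕ) (hj : j < m)
    (w : ℂ) (hw : ∀ i, 1 - μ i * w ≠ 0) :
    ∑ i : Fin m, (μ i ^ j / ∏ l ∈ Finset.univ.erase i, (μ i - μ l)) / (1 - μ i * w)
      = w ^ (m - 1 - j) / ∏ l : Fin m, (1 - μ l * w) := by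
  rw [lagrange_pf m μ hinj j hj w, Finset.sum_div]
  refine Finset.sum_congr rfl fun i _ => ?_
  have hP : (∏ l ∈ Finset.univ.erase i, (1 - μ l * w)) ≠ 0 :=
    Finset.prod_ne_zero_iff.mpr fun l _ => hw l
  rw [← Finset.mul_prod_erase _ _ (Finset.mem_univ i), mul_comm (1 - μ i * w),
    ← div_div, mul_div_assoc, div_self hP, mul_one]

/-- the simple-pole partial fractions in Theorem 9.1:
`z^{3m-3j+r} / ∏_{l=1}^m (1-λ_l³z³) = Σ_{i=1}^{3m} a⁽ʳ⁾_{ij}/(1-λ_iz)` for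
`r = 1, 2` (here `j` is `0`-based, i.e. `j+1` is the `j` of the paper). -/
theorem partial_fraction_simple_pole (m : ℕ) (hm : 1 ≤ m)
    (lam : Fin m → ℂ) (hne : ∀ i, lam i ≠ 0)
    (hinj : Function.Injective fun i => lam i ^ 3)
    (r : ℕ) (hr : r = 1 ∨ r = 2) (j : Fin m) (z : ℂ)
    (hz : ∏ l : Fin m, (1 - lam l ^ 3 * z ^ 3) ≠ 0) :
    z ^ (3 * m - 3 * ((j : ℕ) + 1) + r) / ∏ l : Fin m, (1 - lam l ^ 3 * z ^ 3) =
      ∑ i : Fin 3 × Fin m, arT m lam r i j / (1 - LamT m lam i * z) := by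
  classical
  have hfac : ∀ i : Fin m, 1 - lam i ^ 3 * z ^ 3 ≠ 0 := fun i =>
    Finset.prod_ne_zero_iff.mp hz i (Finset.mem_univ i)
  have per_i : ∀ i : Fin m,
      (∑ c : Fin 3, arT m lam r (c, i) j / (1 - LamT m lam (c, i) * z)) =
        z ^ r * ((lam i ^ 3) ^ (j : ℕ) /
            (∏ l ∈ Finset.univ.erase i, (lam i ^ 3 - lam l ^ 3)) /
          (1 - lam i ^ 3 * z ^ 3)) := by
    intro i
    have ht : 1 - (lam i * z) ^ 3 ≠ 0 := by rw [mul_pow]; exact hfac i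
    have hsum := omega_sum r hr (lam i * z) ht
    have hD : (∏ l ∈ Finset.univ.erase i, (lam i ^ 3 - lam l ^ 3)) ≠ 0 :=
      Finset.prod_ne_zero_iff.mpr fun l hl =>
        sub_ne_zero.mpr fun h => (Finset.mem_erase.mp hl).1 (hinj h).symm
    have hK : lam i ^ (3 * ((j : ℕ) : ℤ) + 3 - 3 - (r : ℤ)) * lam i ^ (r : ℕ) =
        (lam i ^ 3) ^ (j : ℕ) := by
      rw [← zpow_natCast (lam i) r, ← zpow_add₀ (hne i), ← pow_mul,
        ← zpow_natCast (lam i) (3 * (j : ℕ))]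
      congr 1
      push_cast
      ring
    calc (∑ c : Fin 3, arT m lam r (c, i) j / (1 - LamT m lam (c, i) * z))
        = ∑ c : Fin 3,
            (lam i ^ (3 * ((j : ℕ) : ℤ) + 3 - 3 - (r : ℤ)) /
                (3 * ∏ l ∈ Finset.univ.erase i, (lam i ^ 3 - lam l ^ 3))) *
              (omg ^ (-(r : ℤ) * ((c : ℕ) : ℤ)) / (1 - omg ^ (c : ℕ) * (lam i * z))) := by
          refine Finset.sum_congr rfl fun c _ => ?_
          simp only [arT, LamT]
          ring
      _ = (lam i ^ (3 * ((j : ℕ) : ℤ) + 3 - 3 - (r : ℤ)) /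
              (3 * ∏ l ∈ Finset.univ.erase i, (lam i ^ 3 - lam l ^ 3))) *
            (3 * (lam i * z) ^ r / (1 - (lam i * z) ^ 3)) := by
          rw [← Finset.mul_sum, hsum]
      _ = _ := by
          rw [show (1 - (lam i * z) ^ 3) = (1 - lam i ^ 3 * z ^ 3) by rw [mul_pow]]
          rw [div_mul_div_comm, mul_pow (lam i) z r]
          rw [show lam i ^ (3 * ((j : ℕ) : ℤ) + 3 - 3 - (r : ℤ)) *
              (3 * (lam i ^ r * z ^ r)) = 3 * ((lam i ^ 3) ^ (j : ℕ) * z ^ r) by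
            linear_combination 3 * z ^ r * hK]
          rw [div_div, ← mul_div_assoc,
            div_eq_div_iff (by exact mul_ne_zero (mul_ne_zero (by norm_num) hD) (hfac i))
              (mul_ne_zero hD (hfac i))]
          ring
  calc z ^ (3 * m - 3 * ((j : ℕ) + 1) + r) / ∏ l : Fin m, (1 - lam l ^ 3 * z ^ 3)
      = z ^ r * ((z ^ 3) ^ (m - 1 - (j : ℕ)) / ∏ l : Fin m, (1 - lam l ^ 3 * z ^ 3)) := by
        rw [← mul_div_assoc, ← pow_mul, ← pow_add]
        congr 2
        have := j.isLt
        omega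
    _ = z ^ r * ∑ i : Fin m, ((lam i ^ 3) ^ (j : ℕ) /
            (∏ l ∈ Finset.univ.erase i, (lam i ^ 3 - lam l ^ 3)) /
          (1 - lam i ^ 3 * z ^ 3)) := by
        have hpf := pf_div m (fun i => lam i ^ 3) hinj (j : ℕ) j.isLt (z ^ 3) hfac
        rw [hpf]
    _ = ∑ i : Fin m, z ^ r * ((lam i ^ 3) ^ (j : ℕ) /
            (∏ l ∈ Finset.univ.erase i, (lam i ^ 3 - lam l ^ 3)) /
          (1 - lam i ^ 3 * z ^ 3)) := by rw [Finset.mul_sum]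
    _ = ∑ i : Fin m, ∑ c : Fin 3, arT m lam r (c, i) j / (1 - LamT m lam (c, i) * z) := by
        exact Finset.sum_congr rfl fun i _ => (per_i i).symm
    _ = ∑ i : Fin 3 × Fin m, arT m lam r i j / (1 - LamT m lam i * z) := by
        exact (Fintype.sum_prod_type_right
          (f := fun p : Fin 3 × Fin m => arT m lam r p j / (1 - LamT m lam p * z))).symm

end
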